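/- Let ν ≥ 1, C > 0, t ≥ 0, and let σ : ℂ^d → ℂ be entire with |σ(ζ)| ≤ exp(C t (1 + |Im ζ|)^ν) for all ζ ∈ ℂ^d. Set s = 1 − 1/ν. Then there exists a constant C' > 0 (depending on C, d, ν but not on t, α) such that for every ξ ∈ ℝ^d and every multi-index α ∈ ℕ^d, |∂^α σ(ξ)| ≤ C'^{(t+1)|α| + t} (α!)^s. -/

import Mathlib

/-- The partial derivative in the `j`-th coordinate direction. -/
noncomputable def pderivC {d : ℕ} (j : Fin d) (f : (Fin d → ℂ) → ℂ) : (Fin d → ℂ) → ℂ :=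
  fun x => fderiv ℂ f x (Pi.single j 1)

/-- The multi-index partial derivative `∂^α`. -/
noncomputable def multiPDeriv {d : ℕ} (α : Fin d → ℕ) (f : (Fin d → ℂ) → ℂ) :
    (Fin d → ℂ) → ℂ :=
  (List.finRange d).foldr (fun j g => (pderivC j)^[α j] g) f

open Metric MeasureTheory Real Complex intervalIntegral

lemma slice_hasDerivAt {d : ℕ} {f : (Fin d → ℂ) → ℂ} (hf : Differentiable ℂ f)
    (x v : Fin d → ℂ) (u : ℂ) :
    HasDerivAt (fun w : ℂ => f (x + w • v)) (fderiv ℂ f (x + u • v) v) u := by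
  have hA : HasDerivAt (fun w : ℂ => x + w • v) v u := by
    simpa using ((hasDerivAt_id u).smul_const v).const_add x
  exact (hf.differentiableAt.hasFDerivAt).comp_hasDerivAt u hA

lemma cauchy_iter_deriv_bound {h : ℂ → ℂ} (hd : Differentiable ℂ h) {c : ℂ} {R M : ℝ}
    (hR : 0 < R) (hM : ∀ u ∈ closedBall c R, ‖h u‖ ≤ M) (k : ℕ) :
    ‖deriv^[k] h c‖ ≤ (k.factorial : ℝ) * M / R ^ k := by
  have hM0 : 0 ≤ M := le_trans (norm_nonneg _) (hM c (mem_closedBall_self hR.le))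
  lift R to NNReal using hR.le with R' hR'
  have hR'0 : 0 < R' := by exact_mod_cast hR
  have hps := hd.hasFPowerSeriesOnBall c hR'0
  have h1 : deriv^[k] h c = iteratedFDeriv ℂ k h c (fun _ => (1 : ℂ)) := by
    rw [← iteratedDeriv_eq_iterate, iteratedDeriv_eq_iteratedFDeriv]
  have h2 := hps.factorial_smul (y := (1 : ℂ)) k
  rw [h1, ← h2]
  have h3 : ‖cauchyPowerSeries h c R' k‖ ≤
      ((2 * Real.pi)⁻¹ * ∫ θ : ℝ in (0)..2 * Real.pi, ‖h (circleMap c R' θ)‖) *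
        |(R' : ℝ)|⁻¹ ^ k := norm_cauchyPowerSeries_le h c R' k
  have hint : (∫ θ : ℝ in (0)..2 * Real.pi, ‖h (circleMap c R' θ)‖) ≤ 2 * Real.pi * M := by
    have : (∫ θ : ℝ in (0)..2 * Real.pi, ‖h (circleMap c R' θ)‖) ≤
        ∫ _ : ℝ in (0)..2 * Real.pi, M := by
      apply intervalIntegral.integral_mono_on Real.two_pi_pos.le
      · exact ((hd.continuous.comp (continuous_circleMap c R')).norm).intervalIntegrable _ _
      · exact intervalIntegrable_const
      · intro θ _
        exact hM _ (circleMap_mem_closedBall c (by exact_mod_cast hR.le) θ)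
    simpa [mul_comm] using this
  have h4 : ‖cauchyPowerSeries h c R' k‖ ≤ M * |(R' : ℝ)|⁻¹ ^ k := by
    refine h3.trans ?_
    have : (2 * Real.pi)⁻¹ * (∫ θ : ℝ in (0)..2 * Real.pi, ‖h (circleMap c R' θ)‖) ≤ M := by
      rw [inv_mul_le_iff₀ (by positivity)]
      simpa [mul_comm] using hint
    gcongr
  calc ‖(k.factorial : ℕ) • (cauchyPowerSeries h c R' k) (fun _ => (1:ℂ))‖
      = (k.factorial : ℝ) * ‖(cauchyPowerSeries h c R' k) (fun _ => (1:ℂ))‖ := by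
        rw [nsmul_eq_mul, norm_mul]; simp
    _ ≤ (k.factorial : ℝ) * ‖cauchyPowerSeries h c R' k‖ := by
        gcongr
        simpa using (cauchyPowerSeries h c R' k).le_opNorm (fun _ => (1:ℂ))
    _ ≤ (k.factorial : ℝ) * (M * |(R' : ℝ)|⁻¹ ^ k) := by gcongr
    _ = (k.factorial : ℝ) * M / (R' : ℝ) ^ k := by
        rw [_root_.abs_of_nonneg (by positivity : (0:ℝ) ≤ (R' : ℝ))]
        rw [inv_pow]; ring

lemma norm_fderiv_apply_le {d : ℕ} {f : (Fin d → ℂ) → ℂ} (hf : Differentiable ℂ f)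
    {x : Fin d → ℂ} {M r : ℝ} (hr : 0 < r)
    (hM : ∀ y ∈ closedBall x r, ‖f y‖ ≤ M) (v : Fin d → ℂ) :
    ‖fderiv ℂ f x v‖ ≤ M * ‖v‖ / r := by
  have hM0 : 0 ≤ M := le_trans (norm_nonneg _) (hM x (mem_closedBall_self hr.le))
  rcases eq_or_ne v 0 with rfl | hv
  · simp [hr.le, hM0]
  have hvn : 0 < ‖v‖ := norm_pos_iff.mpr hv
  set ρ : ℝ := r / ‖v‖ with hρ
  have hρ0 : 0 < ρ := by positivity
  have hslice : Differentiable ℂ (fun w : ℂ => f (x + w • v)) :=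
    fun u => (slice_hasDerivAt hf x v u).differentiableAt
  have key := cauchy_iter_deriv_bound hslice (c := 0) (R := ρ) (M := M) hρ0 ?_ 1
  · have hder : deriv (fun w : ℂ => f (x + w • v)) 0 = fderiv ℂ f x v := by
      simpa using (slice_hasDerivAt hf x v 0).deriv
    rw [Function.iterate_one, hder] at key
    calc ‖fderiv ℂ f x v‖ ≤ (Nat.factorial 1 : ℝ) * M / ρ ^ 1 := key
      _ = M * ‖v‖ / r := by
          simp only [Nat.factorial_one, Nat.cast_one, one_mul, pow_one, hρ]
          field_simp
  · intro u hu
    apply hM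
    simp only [mem_closedBall] at hu ⊢
    have : dist (x + u • v) x = ‖u‖ * ‖v‖ := by
      simp [dist_eq_norm, norm_smul]
    rw [this]
    calc ‖u‖ * ‖v‖ ≤ ρ * ‖v‖ := by
          have : ‖u‖ ≤ ρ := by simpa [dist_eq_norm] using hu
          gcongr
      _ = r := by rw [hρ, div_mul_cancel₀ r hvn.ne']

lemma pderiv_entire {d : ℕ} {f : (Fin d → ℂ) → ℂ} (hf : Differentiable ℂ f) (v : Fin d → ℂ) :
    Differentiable ℂ (fun x : Fin d → ℂ => fderiv ℂ f x v) := by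
  set G : (Fin d → ℂ) → ℝ → ℂ := fun x θ =>
    (circleMap 0 1 θ * I) * ((circleMap 0 1 θ)⁻¹ ^ 1 * ((circleMap 0 1 θ)⁻¹ *
      f (x + circleMap 0 1 θ • v))) with hG
  have hcm_ne : ∀ θ : ℝ, circleMap 0 1 θ ≠ 0 := fun θ => by
    intro h
    have := norm_circleMap_zero 1 θ
    rw [h] at this
    simp at this
  -- Step A : integral representation
  have formula : ∀ x : Fin d → ℂ,
      fderiv ℂ f x v = (2 * Real.pi * I : ℂ)⁻¹ •
        ∫ θ in Set.Ioc (0:ℝ) (2 * Real.pi), G x θ := by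
    intro x
    have hslice : Differentiable ℂ (fun w : ℂ => f (x + w • v)) :=
      fun u => (slice_hasDerivAt hf x v u).differentiableAt
    have hps := (hslice.hasFPowerSeriesOnBall 0 (R := 1) one_pos).hasFPowerSeriesAt
    have h1 : fderiv ℂ f x v = deriv (fun w : ℂ => f (x + w • v)) 0 := by
      simpa using ((slice_hasDerivAt hf x v 0).deriv).symm
    rw [h1, hps.deriv]
    rw [cauchyPowerSeries_apply]
    congr 1
    simp only [circleIntegral, deriv_circleMap, NNReal.coe_one, sub_zero, one_div,
      smul_eq_mul]
    rw [intervalIntegral.integral_of_le Real.two_pi_pos.le]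
  -- Step B : differentiability of the integral
  intro x₀
  obtain ⟨M, hM⟩ : ∃ M, ∀ y ∈ closedBall x₀ (2 + ‖v‖), ‖f y‖ ≤ M := by
    obtain ⟨M, hM⟩ := (isCompact_closedBall x₀ (2 + ‖v‖)).exists_bound_of_continuousOn
      hf.continuous.continuousOn
    exact ⟨M, hM⟩
  have hM0 : 0 ≤ M := le_trans (norm_nonneg _)
    (hM x₀ (mem_closedBall_self (by positivity)))
  -- operator norm bound on the intermediate ball
  have hop : ∀ z ∈ closedBall x₀ (1 + ‖v‖), ‖fderiv ℂ f z‖ ≤ M := by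
    intro z hz
    refine ContinuousLinearMap.opNorm_le_bound _ hM0 fun w => ?_
    have h1 : ∀ y ∈ closedBall z 1, ‖f y‖ ≤ M := by
      intro y hy
      apply hM
      simp only [mem_closedBall] at hy hz ⊢
      calc dist y x₀ ≤ dist y z + dist z x₀ := dist_triangle _ _ _
        _ ≤ 1 + (1 + ‖v‖) := by gcongr
        _ = 2 + ‖v‖ := by ring
    simpa using norm_fderiv_apply_le hf one_pos h1 w
  -- Lipschitz bound for f on that ball
  have hlipf : ∀ a b, a ∈ closedBall x₀ (1 + ‖v‖) → b ∈ closedBall x₀ (1 + ‖v‖) →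
      ‖f a - f b‖ ≤ M * ‖a - b‖ := by
    intro a b ha hb
    exact (convex_closedBall x₀ (1 + ‖v‖)).norm_image_sub_le_of_norm_fderiv_le
      (fun z _ => hf.differentiableAt) (fun z hz => hop z hz) hb ha
  have hmemball : ∀ (x : Fin d → ℂ), x ∈ ball x₀ 1 → ∀ θ : ℝ,
      x + circleMap 0 1 θ • v ∈ closedBall x₀ (1 + ‖v‖) := by
    intro x hx θ
    simp only [mem_ball] at hx
    simp only [mem_closedBall]
    calc dist (x + circleMap 0 1 θ • v) x₀ ≤ dist (x + circleMap 0 1 θ • v) x + dist x x₀ :=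
        dist_triangle _ _ _
      _ ≤ ‖v‖ + 1 := by
          have h1 : ‖circleMap 0 1 θ‖ = 1 := by simpa using norm_circleMap_zero 1 θ
          refine add_le_add ?_ hx.le
          rw [dist_eq_norm]
          simp [add_sub_cancel_left, norm_smul, h1]
      _ = 1 + ‖v‖ := by ring
  have hcnorm : ∀ θ : ℝ, ‖circleMap 0 1 θ * I * ((circleMap 0 1 θ)⁻¹ ^ 1 *
      (circleMap 0 1 θ)⁻¹)‖ = 1 := by
    intro θ
    have h1 : ‖circleMap 0 1 θ‖ = 1 := by simpa using norm_circleMap_zero 1 θ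
    simp [norm_mul, norm_inv, h1]
  set μ : Measure ℝ := volume.restrict (Set.Ioc (0:ℝ) (2 * Real.pi)) with hμ
  have hGcont : ∀ x, Continuous (G x) := by
    intro x
    apply Continuous.mul
    · exact (continuous_circleMap 0 1).mul continuous_const
    · exact ((((continuous_circleMap 0 1).inv₀ hcm_ne).pow 1).mul
        (((continuous_circleMap 0 1).inv₀ hcm_ne).mul
          (hf.continuous.comp (continuous_const.add ((continuous_circleMap 0 1).smul
            continuous_const)))))
  have key : HasFDerivAt (fun x => ∫ θ, G x θ ∂μ)
      (∫ θ, ((circleMap 0 1 θ * I) * ((circleMap 0 1 θ)⁻¹ ^ 1 * (circleMap 0 1 θ)⁻¹)) •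
        fderiv ℂ f (x₀ + circleMap 0 1 θ • v) ∂μ) x₀ := by
    apply (_root_.hasFDerivAt_integral_of_dominated_loc_of_lip (s := ball x₀ 1)
      (bound := fun _ => M) (ball_mem_nhds x₀ one_pos) ?_ ?_ ?_ ?_ ?_ ?_).2
    · filter_upwards with x
      exact (hGcont x).aestronglyMeasurable
    · apply Continuous.integrableOn_Ioc (hGcont x₀)
    · apply AEStronglyMeasurable.fun_smul
      · exact (((continuous_circleMap 0 1).mul continuous_const).mul
          ((((continuous_circleMap 0 1).inv₀ hcm_ne).pow 1).mul
            ((continuous_circleMap 0 1).inv₀ hcm_ne))).aestronglyMeasurable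
      · apply Measurable.aestronglyMeasurable
        exact (measurable_fderiv ℂ f).comp
          (continuous_const.add ((continuous_circleMap 0 1).smul continuous_const)).measurable
    · filter_upwards with θ
      apply LipschitzOnWith.of_dist_le_mul
      intro x hx y hy
      have hx' := hmemball x hx θ
      have hy' := hmemball y hy θ
      rw [dist_eq_norm, dist_eq_norm]
      have : G x θ - G y θ = (circleMap 0 1 θ * I * ((circleMap 0 1 θ)⁻¹ ^ 1 *
          (circleMap 0 1 θ)⁻¹)) * (f (x + circleMap 0 1 θ • v) - f (y + circleMap 0 1 θ • v)) := by
        simp only [hG]; ring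
      rw [this, norm_mul, hcnorm, one_mul]
      have hsub : (x + circleMap 0 1 θ • v) - (y + circleMap 0 1 θ • v) = x - y := by
        abel
      calc ‖f (x + circleMap 0 1 θ • v) - f (y + circleMap 0 1 θ • v)‖
          ≤ M * ‖(x + circleMap 0 1 θ • v) - (y + circleMap 0 1 θ • v)‖ := hlipf _ _ hx' hy'
        _ = M * ‖x - y‖ := by rw [hsub]
        _ ≤ (Real.nnabs M : ℝ) * ‖x - y‖ := by
            gcongr
            simp only [Real.coe_nnabs]
            exact le_abs_self M
    · exact integrableOn_const measure_Ioc_lt_top.ne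
    · filter_upwards with θ
      have hT : HasFDerivAt (fun x : Fin d → ℂ => x + circleMap 0 1 θ • v)
          (ContinuousLinearMap.id ℂ (Fin d → ℂ)) x₀ := (hasFDerivAt_id x₀).add_const _
      have hcomp := (hf.differentiableAt.hasFDerivAt).comp x₀ hT
      have := hcomp.const_mul (circleMap 0 1 θ * I * ((circleMap 0 1 θ)⁻¹ ^ 1 *
        (circleMap 0 1 θ)⁻¹))
      simp only [ContinuousLinearMap.comp_id, Function.comp_def] at this
      convert this using 2
      · rfl
      simp only [hG]; ring
  have : (fun x : Fin d → ℂ => fderiv ℂ f x v) = fun x =>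
      (2 * Real.pi * I : ℂ)⁻¹ • ∫ θ, G x θ ∂μ := funext fun x => formula x
  rw [this]
  exact (key.differentiableAt.fun_const_smul _)

lemma pderivC_entire {d : ℕ} (j : Fin d) {f : (Fin d → ℂ) → ℂ} (hf : Differentiable ℂ f) :
    Differentiable ℂ (pderivC j f) := pderiv_entire hf ((Pi.single j 1 : Fin d → ℂ))

lemma pderivC_iter_entire {d : ℕ} (j : Fin d) (k : ℕ) {f : (Fin d → ℂ) → ℂ}
    (hf : Differentiable ℂ f) : Differentiable ℂ ((pderivC j)^[k] f) := by
  induction k generalizing f with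
  | zero => exact hf
  | succ k ih =>
    rw [Function.iterate_succ_apply]
    exact ih (pderivC_entire j hf)

lemma pderivC_iter_slice {d : ℕ} (j : Fin d) (k : ℕ) {f : (Fin d → ℂ) → ℂ}
    (hf : Differentiable ℂ f) (c : Fin d → ℂ) (u : ℂ) :
    (pderivC j)^[k] f (c + u • (Pi.single j 1 : Fin d → ℂ)) =
      deriv^[k] (fun w : ℂ => f (c + w • (Pi.single j 1 : Fin d → ℂ))) u := by
  induction k generalizing f with
  | zero => rfl
  | succ k ih =>
    rw [Function.iterate_succ_apply, Function.iterate_succ_apply]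
    rw [ih (pderivC_entire j hf)]
    have : (fun w : ℂ => pderivC j f (c + w • (Pi.single j 1 : Fin d → ℂ))) =
        deriv (fun w : ℂ => f (c + w • (Pi.single j 1 : Fin d → ℂ))) :=
      funext fun w => ((slice_hasDerivAt hf c ((Pi.single j 1 : Fin d → ℂ)) w).deriv).symm
    rw [this]

lemma pderivC_iter_bound {d : ℕ} (j : Fin d) (k : ℕ) {f : (Fin d → ℂ) → ℂ}
    (hf : Differentiable ℂ f) {z : Fin d → ℂ} {R M : ℝ} (hR : 0 < R)
    (hM : ∀ u : ℂ, dist u (z j) ≤ R → ‖f (Function.update z j u)‖ ≤ M) :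
    ‖(pderivC j)^[k] f z‖ ≤ (k.factorial : ℝ) * M / R ^ k := by
  have hup : ∀ u : ℂ, Function.update z j u = z + (u - z j) • (Pi.single j 1 : Fin d → ℂ) := by
    intro u
    funext i
    by_cases h : i = j
    · subst h; simp
    · simp [Function.update_of_ne h, Pi.single_apply, h]
  have hz : z = z + ((z j : ℂ) - z j) • (Pi.single j 1 : Fin d → ℂ) := by simp
  have hslice : Differentiable ℂ (fun w : ℂ => f (z + w • (Pi.single j 1 : Fin d → ℂ))) :=
    fun u => (slice_hasDerivAt hf z ((Pi.single j 1 : Fin d → ℂ)) u).differentiableAt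
  have key := cauchy_iter_deriv_bound hslice (c := z j - z j) (R := R) (M := M) hR ?_ k
  · calc ‖(pderivC j)^[k] f z‖
        = ‖deriv^[k] (fun w : ℂ => f (z + w • (Pi.single j 1 : Fin d → ℂ))) (z j - z j)‖ := by
          rw [← pderivC_iter_slice j k hf z (z j - z j)]
          congr 2
          simpa using hz.symm
      _ ≤ (k.factorial : ℝ) * M / R ^ k := key
  · intro u hu
    have : z + u • (Pi.single j 1 : Fin d → ℂ) = Function.update z j (u + z j) := by
      rw [hup (u + z j)]; simp
    rw [this]
    apply hM
    simp only [mem_closedBall, sub_self] at hu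
    rw [dist_eq_norm] at hu ⊢
    simpa using hu

lemma foldr_pderiv_entire {d : ℕ} (α : Fin d → ℕ) (l : List (Fin d))
    {f : (Fin d → ℂ) → ℂ} (hf : Differentiable ℂ f) :
    Differentiable ℂ (l.foldr (fun j g => (pderivC j)^[α j] g) f) := by
  induction l with
  | nil => exact hf
  | cons j l ih => exact pderivC_iter_entire j (α j) ih

lemma foldr_pderiv_bound {d : ℕ} (α : Fin d → ℕ) (l : List (Fin d)) (hl : l.Nodup)
    {f : (Fin d → ℂ) → ℂ} (hf : Differentiable ℂ f) {R : ℝ} (hR : 0 < R)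
    (z : Fin d → ℂ) (M : ℝ)
    (hM : ∀ w : Fin d → ℂ, (∀ i, i ∉ l → w i = z i) → (∀ i ∈ l, dist (w i) (z i) ≤ R) →
      ‖f w‖ ≤ M) :
    ‖(l.foldr (fun j g => (pderivC j)^[α j] g) f) z‖ ≤
      ((l.map fun j => ((α j).factorial : ℝ)).prod * M) / R ^ ((l.map α).sum) := by
  induction l generalizing z with
  | nil =>
    simpa using hM z (fun i _ => rfl) (by simp)
  | cons j l ih =>
    have hjl : j ∉ l := (List.nodup_cons.mp hl).1
    have hl' : l.Nodup := (List.nodup_cons.mp hl).2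
    simp only [List.foldr_cons]
    have key := pderivC_iter_bound j (α j) (foldr_pderiv_entire α l hf) (z := z) hR
      (M := ((l.map fun j => ((α j).factorial : ℝ)).prod * M) / R ^ ((l.map α).sum)) ?_
    · calc ‖(pderivC j)^[α j] (l.foldr (fun i g => (pderivC i)^[α i] g) f) z‖
          ≤ ((α j).factorial : ℝ) *
            (((l.map fun i => ((α i).factorial : ℝ)).prod * M) / R ^ ((l.map α).sum)) /
              R ^ (α j) := key
        _ = (((j :: l).map fun i => ((α i).factorial : ℝ)).prod * M) /
              R ^ (((j :: l).map α).sum) := by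
            simp only [List.map_cons, List.prod_cons, List.sum_cons, pow_add]
            field_simp
    · intro u hu
      apply ih hl' (Function.update z j u)
      intro w hw1 hw2
      apply hM w
      · intro i hi
        simp only [List.mem_cons, not_or] at hi
        rw [hw1 i hi.2, Function.update_of_ne hi.1]
      · intro i hi
        rcases List.mem_cons.mp hi with rfl | hi'
        · rw [hw1 i hjl, Function.update_self]
          exact hu
        · have hij : i ≠ j := fun h => hjl (h ▸ hi')
          have := hw2 i hi'
          rwa [Function.update_of_ne hij] at this

/-- If `σ : ℂ^d → ℂ` is entire with `|σ(ζ)| ≤ exp(Ct(1 + |Im ζ|)^ν)`, `ν ≥ 1`, then with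
`s = 1 - 1/ν` one has `|∂^α σ(ξ)| ≤ C'^{(t+1)|α| + t} (α!)^s` at real points `ξ`,
with `C'` independent of `t` and `α`. -/
theorem entire_symbol_gevrey_estimates (d : ℕ) (ν C : ℝ) (hν : 1 ≤ ν) (hC : 0 < C) :
    ∃ C' > 0, ∀ t : ℝ, 0 ≤ t → ∀ σ : (Fin d → ℂ) → ℂ, Differentiable ℂ σ →
      (∀ ζ : Fin d → ℂ,
        ‖σ ζ‖ ≤ Real.exp (C * t * (1 + Real.sqrt (∑ j, (ζ j).im ^ 2)) ^ (ν : ℝ))) →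
      ∀ (ξ : Fin d → ℝ) (α : Fin d → ℕ),
        ‖multiPDeriv α σ (fun j => ((ξ j : ℝ) : ℂ))‖ ≤
          C' ^ ((t + 1) * (∑ j, α j : ℝ) + t) *
            (∏ j, (Nat.factorial (α j) : ℝ)) ^ (1 - 1 / ν) := by
  have hν0 : 0 < ν := lt_of_lt_of_le one_pos hν
  have hd0 : (0:ℝ) ≤ Real.sqrt d := Real.sqrt_nonneg _
  set K : ℝ := Real.exp (C * (1 + Real.sqrt d) ^ (ν : ℝ)) with hK
  have hK1 : 1 < K := by
    rw [hK, ← Real.exp_zero]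
    apply Real.exp_lt_exp.mpr
    positivity
  refine ⟨K, lt_trans one_pos hK1, ?_⟩
  intro t ht σ hσd hσb ξ α
  set n : ℕ := ∑ j, α j with hn
  set R : ℝ := ((1:ℝ) + n) ^ ((1:ℝ)/ν) with hR
  have h1n : (1:ℝ) ≤ 1 + n := le_add_of_nonneg_right (Nat.cast_nonneg n)
  have hR1 : (1:ℝ) ≤ R := by
    have := Real.rpow_le_rpow zero_le_one h1n (by positivity : (0:ℝ) ≤ 1/ν)
    rwa [Real.one_rpow] at this
  have hR0 : (0:ℝ) < R := lt_of_lt_of_le one_pos hR1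
  set z : Fin d → ℂ := fun j => ((ξ j : ℝ) : ℂ) with hz
  set M : ℝ := Real.exp (C * t * (1 + Real.sqrt d * R) ^ (ν : ℝ)) with hM
  -- the sup bound on the polydisk
  have hsup : ∀ w : Fin d → ℂ, (∀ i, i ∉ List.finRange d → w i = z i) →
      (∀ i ∈ List.finRange d, dist (w i) (z i) ≤ R) → ‖σ w‖ ≤ M := by
    intro w _ hw2
    refine (hσb w).trans ?_
    rw [hM]
    apply Real.exp_le_exp.mpr
    have hsq : Real.sqrt (∑ j, (w j).im ^ 2) ≤ Real.sqrt d * R := by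
      have hsum : (∑ j, (w j).im ^ 2) ≤ (d : ℝ) * R ^ 2 := by
        have : ∀ j : Fin d, (w j).im ^ 2 ≤ R ^ 2 := by
          intro j
          have him : |(w j).im| ≤ R := by
            have := hw2 j (List.mem_finRange j)
            rw [dist_eq_norm] at this
            calc |(w j).im| = |(w j - z j).im| := by simp [hz]
              _ ≤ ‖w j - z j‖ := Complex.abs_im_le_norm _
              _ ≤ R := this
          calc (w j).im ^ 2 = |(w j).im| ^ 2 := (_root_.sq_abs _).symm
            _ ≤ R ^ 2 := by gcongr
        calc (∑ j, (w j).im ^ 2) ≤ ∑ _j : Fin d, R ^ 2 :=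
            Finset.sum_le_sum fun j _ => this j
          _ = (d : ℝ) * R ^ 2 := by simp [mul_comm]
      calc Real.sqrt (∑ j, (w j).im ^ 2) ≤ Real.sqrt ((d:ℝ) * R ^ 2) :=
          Real.sqrt_le_sqrt hsum
        _ = Real.sqrt d * R := by
            rw [Real.sqrt_mul (by positivity), Real.sqrt_sq hR0.le]
    have : (1 + Real.sqrt (∑ j, (w j).im ^ 2)) ^ (ν:ℝ) ≤ (1 + Real.sqrt d * R) ^ (ν:ℝ) :=
      Real.rpow_le_rpow (by positivity) (by linarith) hν0.le
    exact mul_le_mul_of_nonneg_left this (by positivity)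
  -- main bound from the polydisk Cauchy estimate
  have main := foldr_pderiv_bound α (List.finRange d) (List.nodup_finRange d) hσd hR0 z M hsup
  set Pr : ℝ := ∏ j, ((α j).factorial : ℝ) with hPr
  have hPr1 : (1:ℝ) ≤ Pr := by
    rw [hPr, ← Nat.cast_prod]
    exact_mod_cast Nat.one_le_iff_ne_zero.mpr
      (Finset.prod_pos (fun j _ => (α j).factorial_pos)).ne'
  have hPr0 : (0:ℝ) < Pr := lt_of_lt_of_le one_pos hPr1
  have hlistprod : ((List.finRange d).map fun j => ((α j).factorial : ℝ)).prod = Pr := by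
    rw [hPr, Fin.prod_univ_def]
  have hlistsum : ((List.finRange d).map α).sum = n := by
    rw [hn, Fin.sum_univ_def]
  rw [hlistprod, hlistsum] at main
  -- R^ν = 1 + n
  have hRν : R ^ (ν:ℝ) = 1 + n := by
    rw [hR, ← Real.rpow_mul (by positivity), one_div_mul_cancel hν0.ne', Real.rpow_one]
  -- bound on M
  have hMK : M ≤ K ^ (t * (1 + n)) := by
    have h1 : (1 + Real.sqrt d * R) ^ (ν:ℝ) ≤ (1 + Real.sqrt d) ^ (ν:ℝ) * (1 + n) := by
      calc (1 + Real.sqrt d * R) ^ (ν:ℝ) ≤ ((1 + Real.sqrt d) * R) ^ (ν:ℝ) := by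
            apply Real.rpow_le_rpow (by positivity) ?_ hν0.le
            have : (1 + Real.sqrt d) * R = R + Real.sqrt d * R := by ring
            rw [this]
            gcongr
        _ = (1 + Real.sqrt d) ^ (ν:ℝ) * (1 + n) := by
            rw [Real.mul_rpow (by positivity) hR0.le, hRν]
    calc M ≤ Real.exp ((C * (1 + Real.sqrt d) ^ (ν:ℝ)) * (t * (1 + n))) := by
          rw [hM]
          apply Real.exp_le_exp.mpr
          calc C * t * (1 + Real.sqrt d * R) ^ (ν:ℝ)
              ≤ C * t * ((1 + Real.sqrt d) ^ (ν:ℝ) * (1 + n)) := by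
                apply mul_le_mul_of_nonneg_left h1 (by positivity)
            _ = (C * (1 + Real.sqrt d) ^ (ν:ℝ)) * (t * (1 + n)) := by ring
      _ = K ^ (t * (1 + n)) := by rw [Real.exp_mul, hK]
  -- Pr ≤ (1+n)^n and hence Pr^(1/ν) ≤ R^n
  have hPrn : Pr ≤ ((1:ℝ) + n) ^ (n:ℕ) := by
    have hnat : (∏ j, (α j).factorial) ≤ (1 + n) ^ n := by
      calc (∏ j, (α j).factorial) ≤ ∏ j, (1 + n) ^ (α j) := by
            apply Finset.prod_le_prod (fun _ _ => Nat.zero_le _)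
            intro j _
            calc (α j).factorial ≤ (α j) ^ (α j) := Nat.factorial_le_pow _
              _ ≤ (1 + n) ^ (α j) := by
                  apply Nat.pow_le_pow_left
                  have : α j ≤ n := Finset.single_le_sum (f := fun j => α j)
                    (fun _ _ => Nat.zero_le _) (Finset.mem_univ j)
                  omega
        _ = (1 + n) ^ (∑ j, α j) := (Finset.prod_pow_eq_pow_sum _ _ _)
        _ = (1 + n) ^ n := by rw [hn]
    calc Pr = ((∏ j, (α j).factorial : ℕ) : ℝ) := by rw [hPr]; push_cast; rfl
      _ ≤ (((1 + n) ^ n : ℕ) : ℝ) := by exact_mod_cast hnat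
      _ = ((1:ℝ) + n) ^ (n:ℕ) := by push_cast; ring
  have hPrR : Pr ^ ((1:ℝ)/ν) ≤ R ^ (n:ℕ) := by
    calc Pr ^ ((1:ℝ)/ν) ≤ (((1:ℝ) + n) ^ (n:ℕ)) ^ ((1:ℝ)/ν) :=
        Real.rpow_le_rpow hPr0.le hPrn (by positivity)
      _ = R ^ (n:ℕ) := by
          have e1 : (((1:ℝ)+n) ^ (n:ℕ)) ^ ((1:ℝ)/ν) = ((1:ℝ)+n) ^ ((n:ℝ) * (1/ν)) := by
            rw [← Real.rpow_natCast ((1:ℝ)+n) n, ← Real.rpow_mul (by positivity)]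
          have e2 : R ^ (n:ℕ) = ((1:ℝ)+n) ^ ((1/ν) * (n:ℝ)) := by
            rw [hR, ← Real.rpow_natCast (((1:ℝ)+n) ^ ((1:ℝ)/ν)) n,
              ← Real.rpow_mul (by positivity)]
          rw [e1, e2, mul_comm]
  have hPrsplit : Pr / R ^ (n:ℕ) ≤ Pr ^ (1 - 1/ν) := by
    rw [div_le_iff₀ (by positivity)]
    calc Pr = Pr ^ ((1:ℝ) - 1/ν + 1/ν) := by
          rw [show (1:ℝ) - 1/ν + 1/ν = 1 by ring, Real.rpow_one]
      _ = Pr ^ (1 - 1/ν) * Pr ^ ((1:ℝ)/ν) := Real.rpow_add hPr0 _ _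
      _ ≤ Pr ^ (1 - 1/ν) * R ^ (n:ℕ) := mul_le_mul_of_nonneg_left hPrR (by positivity)
  -- final computation
  have hexp : t * (1 + n) ≤ (t + 1) * (n:ℝ) + t := by
    have : (0:ℝ) ≤ n := Nat.cast_nonneg n
    nlinarith
  have hcast : (∑ j, (α j : ℝ)) = (n : ℝ) := by rw [hn]; push_cast; ring
  unfold multiPDeriv
  calc ‖List.foldr (fun j g => (pderivC j)^[α j] g) σ (List.finRange d) z‖
      ≤ (Pr * M) / R ^ (n:ℕ) := main
    _ = M * (Pr / R ^ (n:ℕ)) := by ring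
    _ ≤ K ^ (t * (1 + n)) * Pr ^ (1 - 1/ν) := by
        apply mul_le_mul hMK hPrsplit (by positivity) (by positivity)
    _ ≤ K ^ ((t + 1) * (n:ℝ) + t) * Pr ^ (1 - 1/ν) := by
        apply mul_le_mul_of_nonneg_right
          (Real.rpow_le_rpow_of_exponent_le hK1.le hexp) (by positivity)
    _ = K ^ ((t + 1) * (∑ j, (α j:ℝ)) + t) * Pr ^ (1 - 1/ν) := by rw [hcast]
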